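/- For every A ⊆ E: if A contains an OX-circuit of M then r'(A) = r(A) + 1, and otherwise r'(A) = r(A). -/

import Mathlib

open Set

namespace ESSplit

variable {α : Type*}

/-- A circuit of a matroid: a minimal dependent set. -/
def IsCircuit (M : Matroid α) (C : Set α) : Prop :=
  M.Dep C ∧ ∀ D, D ⊂ C → M.Indep D

/-- A binary matroid: one representable over GF(2). -/
def IsBinary (M : Matroid α) : Prop :=
  ∃ (n : ℕ) (φ : α → (Fin n → ZMod 2)),
    ∀ I, I ⊆ M.E → (M.Indep I ↔ LinearIndependent (ZMod 2) (fun x : I => φ x.1))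

/-- An OX-circuit: a circuit meeting `X` in an odd number of elements. -/
def IsOX (M : Matroid α) (X C : Set α) : Prop :=
  IsCircuit M C ∧ Odd (C ∩ X).ncard

/-- An EX-circuit: a circuit meeting `X` in an even number of elements. -/
def IsEX (M : Matroid α) (X C : Set α) : Prop :=
  IsCircuit M C ∧ Even (C ∩ X).ncard

/-- `D` is a union of two disjoint OX-circuits containing no EX-circuit. -/
def OXUnion (M : Matroid α) (X D : Set α) : Prop :=
  ∃ C₁ C₂, IsOX M X C₁ ∧ IsOX M X C₂ ∧ Disjoint C₁ C₂ ∧ D = C₁ ∪ C₂ ∧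
    ¬ ∃ C₀, IsEX M X C₀ ∧ C₀ ⊆ D

/-- The description of the circuits of the es-splitting matroid `M_X^e`. -/
def ESCircuit (M : Matroid α) (X : Set α) (e a γ : α) (C : Set α) : Prop :=
  C = {e, a, γ} ∨
  IsEX M X C ∨
  (OXUnion M X C ∧ ∀ D, OXUnion M X D → D ⊆ C → D = C) ∨
  (∃ C₀, IsOX M X C₀ ∧ C = C₀ ∪ {a}) ∨
  (∃ C₀, IsOX M X C₀ ∧ e ∉ C₀ ∧ C = C₀ ∪ {e, γ}) ∨
  (∃ C₀, IsOX M X C₀ ∧ e ∈ C₀ ∧ C = (C₀ \ {e}) ∪ {γ}) ∨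
  (∃ C₀, IsCircuit M C₀ ∧ e ∈ C₀ ∧ Odd (((C₀ \ {e}) ∩ X).ncard) ∧
      C = (C₀ \ {e}) ∪ {a, γ})

/-- `M'` is the es-splitting matroid `M_X^e` of `M` (with new elements `a`, `γ`):
it has ground set `M.E ∪ {a, γ}` and its circuits are exactly as described. -/
def IsESSplit (M M' : Matroid α) (X : Set α) (e a γ : α) : Prop :=
  M'.E = M.E ∪ {a, γ} ∧ ∀ C, IsCircuit M' C ↔ ESCircuit M X e a γ C

/-- The set `T(A)`. -/
def T (M : Matroid α) (X : Set α) (e : α) (A : Set α) : Set α :=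
  {x | x ∈ M.E \ A ∧ x ≠ e ∧ ∃ C, IsOX M X C ∧ x ∈ C ∧ e ∈ C ∧ C ⊆ A ∪ {e, x}}

/-- The set `F(A)`. -/
def F (M : Matroid α) (X A : Set α) : Set α :=
  {x | x ∈ M.closure A \ A ∧ ∃ C, IsOX M X C ∧ x ∈ C ∧ C ⊆ M.closure A}

/-- The rank of a set `A` in a (finite) matroid: the maximum size of an
independent subset of `A`. -/
noncomputable def rk (M : Matroid α) (A : Set α) : ℕ :=
  sSup {n | ∃ I, M.Indep I ∧ I ⊆ A ∧ I.ncard = n}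

end ESSplit

open ESSplit
open scoped symmDiff

namespace ESProof

open scoped Classical symmDiff

variable {α : Type*} {m : ℕ}

lemma zmod2_em (x : ZMod 2) : x = 0 ∨ x = 1 := by revert x; decide

lemma zmod2_one_ne_zero : (1 : ZMod 2) ≠ 0 := by decide

lemma addself (k : ℕ) (v : Fin k → ZMod 2) : v + v = 0 := by
  funext i
  have : ∀ y : ZMod 2, y + y = 0 := by decide
  simpa using this (v i)

lemma odd_of_odd_add_even {a b c : ℕ} (h : a = b + c) (ha : Odd a) (hb : Even b) : Odd c := by
  rcases ha with ⟨i, hi⟩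
  rcases hb with ⟨j, hj⟩
  rcases Nat.even_or_odd c with ⟨k, hk⟩ | hc
  · omega
  · exact hc

lemma odd_of_even_add_odd {a b c : ℕ} (h : a = b + c) (ha : Even a) (hb : Odd b) : Odd c := by
  rcases ha with ⟨i, hi⟩
  rcases hb with ⟨j, hj⟩
  rcases Nat.even_or_odd c with ⟨k, hk⟩ | hc
  · omega
  · exact hc

/-- `I` has a nonempty finite subset whose `f`-vectors sum to zero. -/
def HZS (f : α → (Fin m → ZMod 2)) (I : Set α) : Prop :=
  ∃ S : Finset α, S.Nonempty ∧ ↑S ⊆ I ∧ ∑ x ∈ S, f x = 0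

lemma HZS.mono {f : α → (Fin m → ZMod 2)} {I I' : Set α} (h : HZS f I) (hII' : I ⊆ I') :
    HZS f I' := by
  obtain ⟨S, h1, h2, h3⟩ := h
  exact ⟨S, h1, h2.trans hII', h3⟩

lemma li_iff (f : α → (Fin m → ZMod 2)) (I : Set α) :
    LinearIndependent (ZMod 2) (fun x : I => f x.1) ↔ ¬ HZS f I := by
  classical
  have : (fun x : I => f x.1) = f ∘ (↑) := rfl
  rw [this, linearIndependent_comp_subtype_iff, linearIndepOn_iff]
  constructor
  · rintro h ⟨S, hne, hSI, hsum⟩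
    set l : α →₀ ZMod 2 :=
      ⟨S, fun x => if x ∈ S then 1 else 0, by intro a; split <;> simp_all⟩ with hl
    have hmem : l ∈ Finsupp.supported (ZMod 2) (ZMod 2) I := by
      rw [Finsupp.mem_supported]
      rw [show l.support = S from rfl]
      exact hSI
    have hcomb : Finsupp.linearCombination (ZMod 2) f l = 0 := by
      rw [Finsupp.linearCombination_apply, Finsupp.sum]
      rw [show l.support = S from rfl, ← hsum]
      refine Finset.sum_congr rfl fun x hx => ?_
      have : l x = 1 := by simp [hl, hx]
      rw [this, one_smul]
    have h0 := h l hmem hcomb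
    obtain ⟨x, hx⟩ := hne
    have : l x = 0 := by rw [h0]; rfl
    simp [hl, hx] at this
  · intro h l hl hl0
    by_contra hne0
    refine h ⟨l.support, Finsupp.support_nonempty_iff.2 hne0, (Finsupp.mem_supported _ l).1 hl, ?_⟩
    rw [Finsupp.linearCombination_apply, Finsupp.sum] at hl0
    rw [← hl0]
    refine Finset.sum_congr rfl fun x hx => ?_
    rcases zmod2_em (l x) with h0 | h1
    · exact absurd h0 (Finsupp.mem_support_iff.1 hx)
    · rw [h1, one_smul]

/-- augmented representation -/
noncomputable def psi (φ : α → Fin m → ZMod 2) (X : Set α) : α → Fin (m + 1) → ZMod 2 :=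
  fun x => Fin.snoc (φ x) (if x ∈ X then 1 else 0)

lemma sum_psi (φ : α → Fin m → ZMod 2) (X : Set α) (S : Finset α) :
    ∑ x ∈ S, psi φ X x
      = Fin.snoc (∑ x ∈ S, φ x) (∑ x ∈ S, if x ∈ X then (1 : ZMod 2) else 0) := by
  funext j
  induction j using Fin.lastCases with
  | last => simp [psi, Finset.sum_apply]
  | cast i => simp [psi, Finset.sum_apply]

lemma snoc_eq_snoc_iff {u v : Fin m → ZMod 2} {c d : ZMod 2} :
    (Fin.snoc u c : Fin (m + 1) → ZMod 2) = Fin.snoc v d ↔ u = v ∧ c = d := by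
  constructor
  · intro h
    constructor
    · funext i
      have := congrFun h i.castSucc
      simpa using this
    · have := congrFun h (Fin.last m)
      simpa using this
  · rintro ⟨rfl, rfl⟩; rfl

lemma snoc_eq_zero_iff {u : Fin m → ZMod 2} {c : ZMod 2} :
    (Fin.snoc u c : Fin (m + 1) → ZMod 2) = 0 ↔ u = 0 ∧ c = 0 := by
  have h0 : (0 : Fin (m + 1) → ZMod 2) = Fin.snoc (0 : Fin m → ZMod 2) 0 := by
    funext j
    induction j using Fin.lastCases with
    | last => simp
    | cast i => simp
  rw [h0, snoc_eq_snoc_iff]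

lemma par_eq (X : Set α) (S : Finset α) :
    (∑ x ∈ S, if x ∈ X then (1 : ZMod 2) else 0) = (((S : Set α) ∩ X).ncard : ZMod 2) := by
  classical
  rw [Finset.sum_boole]
  congr 1
  rw [← Set.ncard_coe_finset]
  congr 1
  ext x
  simp [and_comm]

lemma cast2_even {n : ℕ} (h : Even n) : (n : ZMod 2) = 0 := by
  obtain ⟨k, rfl⟩ := h
  push_cast
  ring_nf
  rw [show ((2:ZMod 2) = 0) by decide]
  ring

lemma cast2_odd {n : ℕ} (h : Odd n) : (n : ZMod 2) = 1 := by
  obtain ⟨k, rfl⟩ := h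
  push_cast
  rw [show ((2:ZMod 2) = 0) by decide]
  ring

lemma even_of_cast2 {n : ℕ} (h : (n : ZMod 2) = 0) : Even n := by
  rcases Nat.even_or_odd n with he | ho
  · exact he
  · exact absurd (cast2_odd ho ▸ h) zmod2_one_ne_zero

lemma psi_sum_zero_iff (φ : α → Fin m → ZMod 2) (X : Set α) (S : Finset α) :
    ∑ x ∈ S, psi φ X x = 0 ↔ ∑ x ∈ S, φ x = 0 ∧ Even (((S : Set α) ∩ X).ncard) := by
  rw [sum_psi, snoc_eq_zero_iff, par_eq]
  constructor
  · rintro ⟨h1, h2⟩; exact ⟨h1, even_of_cast2 h2⟩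
  · rintro ⟨h1, h2⟩; exact ⟨h1, cast2_even h2⟩

lemma psi_sum_snoc01_iff (φ : α → Fin m → ZMod 2) (X : Set α) (S : Finset α) :
    ∑ x ∈ S, psi φ X x = (Fin.snoc 0 1 : Fin (m+1) → ZMod 2) ↔
      ∑ x ∈ S, φ x = 0 ∧ Odd (((S : Set α) ∩ X).ncard) := by
  rw [sum_psi, snoc_eq_snoc_iff, par_eq]
  constructor
  · rintro ⟨h1, h2⟩
    refine ⟨h1, ?_⟩
    rcases Nat.even_or_odd (((S : Set α) ∩ X).ncard) with he | ho
    · exact absurd (cast2_even he ▸ h2.symm) zmod2_one_ne_zero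
    · exact ho
  · rintro ⟨h1, h2⟩; exact ⟨h1, cast2_odd h2⟩

lemma mem_span_finsum {f : α → Fin m → ZMod 2} {B : Set α} {v : Fin m → ZMod 2}
    (h : v ∈ Submodule.span (ZMod 2) (f '' B)) :
    ∃ S : Finset α, ↑S ⊆ B ∧ ∑ x ∈ S, f x = v := by
  rw [Finsupp.mem_span_image_iff_linearCombination] at h
  obtain ⟨l, hl, hlv⟩ := h
  refine ⟨l.support, (Finsupp.mem_supported _ l).1 hl, ?_⟩
  rw [Finsupp.linearCombination_apply, Finsupp.sum] at hlv
  rw [← hlv]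
  refine Finset.sum_congr rfl fun x hx => ?_
  rcases zmod2_em (l x) with h0 | h1
  · exact absurd h0 (Finsupp.mem_support_iff.1 hx)
  · rw [h1, one_smul]

lemma sum_symmDiff_char2 [DecidableEq α] (f : α → Fin m → ZMod 2) (S T : Finset α) :
    ∑ x ∈ S ∆ T, f x = ∑ x ∈ S, f x + ∑ x ∈ T, f x := by
  have h1 := Finset.sum_union_inter (s₁ := S) (s₂ := T) (f := f)
  have h2 : S ∪ T = (S ∆ T) ∪ (S ∩ T) := by
    ext x
    simp only [Finset.mem_union, Finset.mem_symmDiff, Finset.mem_inter]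
    tauto
  have h3 : Disjoint (S ∆ T) (S ∩ T) := by
    rw [Finset.disjoint_left]
    intro x hx hx2
    simp only [Finset.mem_symmDiff, Finset.mem_inter] at hx hx2
    tauto
  rw [h2, Finset.sum_union h3] at h1
  have h4 := addself m (∑ x ∈ S ∩ T, f x)
  calc ∑ x ∈ S ∆ T, f x
      = ∑ x ∈ S ∆ T, f x + (∑ x ∈ S ∩ T, f x + ∑ x ∈ S ∩ T, f x) := by rw [h4, add_zero]
    _ = (∑ x ∈ S ∆ T, f x + ∑ x ∈ S ∩ T, f x) + ∑ x ∈ S ∩ T, f x := by rw [add_assoc]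
    _ = ∑ x ∈ S, f x + ∑ x ∈ T, f x := h1

section MatroidPart

variable {M : Matroid α} {φ : α → Fin m → ZMod 2}

/-- any finite dependent set contains a circuit (minimal dependent set) -/
lemma dep_contains_circuit (N : Matroid α) :
    ∀ (n : ℕ) (D : Set α), D.ncard ≤ n → D.Finite → N.Dep D →
      ∃ C, IsCircuit N C ∧ C ⊆ D := by
  intro n
  induction n with
  | zero =>
    intro D hcard hfinD hdep
    rw [Nat.le_zero, Set.ncard_eq_zero hfinD] at hcard
    subst hcard
    exact absurd N.empty_indep hdep.not_indep
  | succ n ih =>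
    intro D hcard hfinD hdep
    by_cases h : ∀ D', D' ⊂ D → N.Indep D'
    · exact ⟨D, ⟨hdep, h⟩, subset_rfl⟩
    · push_neg at h
      obtain ⟨D', hD'ss, hD'⟩ := h
      have hdep' : N.Dep D' := ⟨hD', hD'ss.subset.trans hdep.subset_ground⟩
      have hfin' : D'.Finite := hfinD.subset hD'ss.subset
      have hlt : D'.ncard < D.ncard := Set.ncard_lt_ncard hD'ss hfinD
      obtain ⟨C, hC, hCD⟩ := ih D' (by omega) hfin' hdep'
      exact ⟨C, hC, hCD.trans hD'ss.subset⟩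

variable (hφ : ∀ I, I ⊆ M.E → (M.Indep I ↔ LinearIndependent (ZMod 2) (fun x : I => φ x.1)))

include hφ

lemma indep_iff_hzs {I : Set α} (hIE : I ⊆ M.E) : M.Indep I ↔ ¬ HZS φ I :=
  (hφ I hIE).trans (li_iff φ I)

/-- structure of a circuit: it is a finset with zero sum -/
lemma circuit_structure {C : Set α} (hC : IsCircuit M C) :
    ∃ S : Finset α, (S : Set α) = C ∧ S.Nonempty ∧ ∑ x ∈ S, φ x = 0 := by
  have hCE : C ⊆ M.E := hC.1.subset_ground
  have hdep : ¬ M.Indep C := hC.1.not_indep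
  have hhzs : HZS φ C := by
    by_contra h
    exact hdep ((indep_iff_hzs hφ hCE).2 h)
  obtain ⟨S, hne, hSC, hsum⟩ := hhzs
  refine ⟨S, ?_, hne, hsum⟩
  by_contra hne'
  have hss : (S : Set α) ⊂ C := ssubset_of_subset_of_ne hSC hne'
  have hind : M.Indep (S : Set α) := hC.2 _ hss
  exact (indep_iff_hzs hφ (hSC.trans hCE)).1 hind ⟨S, hne, subset_rfl, hsum⟩

/-- a nonempty zero-sum finset inside the ground set contains a circuit -/
lemma exists_circuit_subset :
    ∀ (n : ℕ) (S : Finset α), S.card ≤ n → S.Nonempty → ↑S ⊆ M.E → ∑ x ∈ S, φ x = 0 →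
      ∃ C, IsCircuit M C ∧ C ⊆ (S : Set α) := by
  intro n
  induction n with
  | zero =>
    intro S hcard hne
    rw [Nat.le_zero, Finset.card_eq_zero] at hcard
    subst hcard
    exact absurd hne (by simp)
  | succ n ih =>
    intro S hcard hne hSE hsum
    by_cases h : ∀ D, D ⊂ (S : Set α) → M.Indep D
    · refine ⟨S, ⟨?_, h⟩, subset_rfl⟩
      rw [Matroid.dep_iff]
      exact ⟨fun hind => (indep_iff_hzs hφ hSE).1 hind ⟨S, hne, subset_rfl, hsum⟩, hSE⟩
    · push_neg at h
      obtain ⟨D, hDss, hD⟩ := h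
      have hDE : D ⊆ M.E := hDss.subset.trans hSE
      have hhzs : HZS φ D := by
        by_contra hcon
        exact hD ((indep_iff_hzs hφ hDE).2 hcon)
      obtain ⟨S', hne', hS'D, hsum'⟩ := hhzs
      have hS'S : S' ⊆ S := by
        rw [← Finset.coe_subset]
        exact hS'D.trans hDss.subset
      have hS'ne : S' ≠ S := by
        rintro rfl
        exact hDss.not_subset hS'D
      have hlt : S'.card < S.card := Finset.card_lt_card (lt_of_le_of_ne hS'S hS'ne)
      obtain ⟨C, hC, hCS'⟩ := ih S' (by omega) hne' (hS'D.trans hDE) hsum'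
      exact ⟨C, hC, hCS'.trans (hS'D.trans hDss.subset)⟩

/-- an odd-parity zero-sum finset contains an OX-circuit -/
lemma OX_of_odd (X : Set α) :
    ∀ (n : ℕ) (S : Finset α), S.card ≤ n → ↑S ⊆ M.E → ∑ x ∈ S, φ x = 0 →
      Odd (((S : Set α) ∩ X).ncard) → ∃ C, IsOX M X C ∧ C ⊆ (S : Set α) := by
  intro n
  induction n with
  | zero =>
    intro S hcard _ _ ho
    rw [Nat.le_zero, Finset.card_eq_zero] at hcard
    subst hcard
    simp [Nat.odd_iff] at ho
  | succ n ih =>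
    intro S hcard hSE hsum ho
    have hne : S.Nonempty := by
      rcases S.eq_empty_or_nonempty with rfl | h
      · simp [Nat.odd_iff] at ho
      · exact h
    obtain ⟨C, hC, hCS⟩ := exists_circuit_subset hφ S.card S le_rfl hne hSE hsum
    obtain ⟨S₀, hS₀C, hne₀, hsum₀⟩ := circuit_structure hφ hC
    rcases Nat.even_or_odd ((C ∩ X).ncard) with he | hoC
    · -- C is an EX-circuit; pass to S \ S₀
      have hS₀S : S₀ ⊆ S := by
        rw [← Finset.coe_subset, hS₀C]
        exact hCS
      have hsum' : ∑ x ∈ S \ S₀, φ x = 0 := by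
        have h1 := Finset.sum_sdiff (f := φ) hS₀S
        rw [hsum₀, add_zero] at h1
        rw [h1, hsum]
      have hu : ((S : Set α) ∩ X) = (((S \ S₀ : Finset α) : Set α) ∩ X) ∪ ((S₀ : Set α) ∩ X) := by
        rw [Finset.coe_sdiff, ← Set.union_inter_distrib_right, Set.diff_union_of_subset]
        rw [hS₀C]; exact hCS
      have hd : Disjoint (((S \ S₀ : Finset α) : Set α) ∩ X) ((S₀ : Set α) ∩ X) := by
        rw [Finset.coe_sdiff]
        exact (Set.disjoint_sdiff_left).mono inter_subset_left inter_subset_left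
      have hcardeq : ((S : Set α) ∩ X).ncard
          = (((S \ S₀ : Finset α) : Set α) ∩ X).ncard + ((S₀ : Set α) ∩ X).ncard := by
        rw [hu]
        exact Set.ncard_union_eq hd ((S \ S₀).finite_toSet.subset inter_subset_left)
          (S₀.finite_toSet.subset inter_subset_left)
      have ho' : Odd ((((S \ S₀ : Finset α) : Set α) ∩ X).ncard) := by
        have he' : Even (((S₀ : Set α) ∩ X).ncard) := by rw [hS₀C]; exact he
        exact odd_of_odd_add_even (by omega) ho he'
      have hclt : (S \ S₀).card < S.card := by
        have h1 : (S \ S₀).card = S.card - S₀.card := Finset.card_sdiff_of_subset hS₀S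
        have h2 : 0 < S₀.card := Finset.card_pos.2 hne₀
        have h3 : S₀.card ≤ S.card := Finset.card_le_card hS₀S
        omega
      obtain ⟨C', hC', hC'sub⟩ := ih (S \ S₀) (by omega) ((Finset.coe_subset.2 (Finset.sdiff_subset)).trans hSE) hsum' ho'
      exact ⟨C', hC', hC'sub.trans (Finset.coe_subset.2 (Finset.sdiff_subset))⟩
    · exact ⟨C, ⟨hC, hoC⟩, hCS⟩

/-- an even-parity zero-sum nonempty finset contains an EX-circuit or two disjoint
OX-circuits -/
lemma even_structure (X : Set α) (S : Finset α) (hne : S.Nonempty) (hSE : ↑S ⊆ M.E)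
    (hsum : ∑ x ∈ S, φ x = 0) (heven : Even (((S : Set α) ∩ X).ncard)) :
    (∃ C, IsEX M X C ∧ C ⊆ (S : Set α)) ∨
      (∃ C₁ C₂, IsOX M X C₁ ∧ IsOX M X C₂ ∧ Disjoint C₁ C₂ ∧ C₁ ∪ C₂ ⊆ (S : Set α)) := by
  obtain ⟨C, hC, hCS⟩ := exists_circuit_subset hφ S.card S le_rfl hne hSE hsum
  rcases Nat.even_or_odd ((C ∩ X).ncard) with he | hoC
  · exact Or.inl ⟨C, ⟨hC, he⟩, hCS⟩
  · obtain ⟨S₀, hS₀C, hne₀, hsum₀⟩ := circuit_structure hφ hC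
    have hS₀S : S₀ ⊆ S := by
      rw [← Finset.coe_subset, hS₀C]
      exact hCS
    have hsum' : ∑ x ∈ S \ S₀, φ x = 0 := by
      have h1 := Finset.sum_sdiff (f := φ) hS₀S
      rw [hsum₀, add_zero] at h1
      rw [h1, hsum]
    have hu : ((S : Set α) ∩ X) = (((S \ S₀ : Finset α) : Set α) ∩ X) ∪ ((S₀ : Set α) ∩ X) := by
      rw [Finset.coe_sdiff, ← Set.union_inter_distrib_right, Set.diff_union_of_subset]
      rw [hS₀C]; exact hCS
    have hd : Disjoint (((S \ S₀ : Finset α) : Set α) ∩ X) ((S₀ : Set α) ∩ X) := by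
      rw [Finset.coe_sdiff]
      exact (Set.disjoint_sdiff_left).mono inter_subset_left inter_subset_left
    have hcardeq : ((S : Set α) ∩ X).ncard
        = (((S \ S₀ : Finset α) : Set α) ∩ X).ncard + ((S₀ : Set α) ∩ X).ncard := by
      rw [hu]
      exact Set.ncard_union_eq hd ((S \ S₀).finite_toSet.subset inter_subset_left)
        (S₀.finite_toSet.subset inter_subset_left)
    have ho' : Odd ((((S \ S₀ : Finset α) : Set α) ∩ X).ncard) := by
      have hoS₀ : Odd (((S₀ : Set α) ∩ X).ncard) := by rw [hS₀C]; exact hoC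
      exact odd_of_even_add_odd (by omega) heven hoS₀
    obtain ⟨C', hC', hC'sub⟩ := OX_of_odd hφ X (S \ S₀).card (S \ S₀) le_rfl
      ((Finset.coe_subset.2 (Finset.sdiff_subset)).trans hSE) hsum' ho'
    refine Or.inr ⟨C, C', ⟨hC, hoC⟩, hC', ?_, union_subset hCS
      (hC'sub.trans (Finset.coe_subset.2 (Finset.sdiff_subset)))⟩
    have hsub2 : C' ⊆ (S : Set α) \ (S₀ : Set α) := by
      rw [← Finset.coe_sdiff]
      exact hC'sub
    rw [← hS₀C]
    exact Disjoint.mono_right hsub2 (Set.disjoint_sdiff_right (s := (S₀ : Set α)) (t := (S : Set α)))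


section MPrime

variable {M' : Matroid α} {X : Set α} {e a γ : α}
variable (hfin : M.E.Finite) (haE : a ∉ M.E) (hγE : γ ∉ M.E)
variable (hE' : M'.E = M.E ∪ {a, γ})
variable (hcirc : ∀ C, IsCircuit M' C ↔ ESCircuit M X e a γ C)

include hcirc

lemma hzs_to_circuitM' {D : Set α} (hD : D ⊆ M.E) (h : HZS (psi φ X) D) :
    ∃ C, IsCircuit M' C ∧ C ⊆ D := by
  obtain ⟨S, hne, hSD, hsum⟩ := h
  rw [psi_sum_zero_iff] at hsum
  obtain ⟨hsφ, heven⟩ := hsum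
  rcases even_structure hφ X S hne (hSD.trans hD) hsφ heven with
    ⟨C, hEX, hCS⟩ | ⟨C₁, C₂, h1, h2, hdisj, hsub⟩
  · exact ⟨C, (hcirc C).2 (Or.inr (Or.inl hEX)), hCS.trans hSD⟩
  · by_cases hex : ∃ C₀, IsEX M X C₀ ∧ C₀ ⊆ C₁ ∪ C₂
    · obtain ⟨C₀, h0, hsub0⟩ := hex
      exact ⟨C₀, (hcirc C₀).2 (Or.inr (Or.inl h0)), (hsub0.trans hsub).trans hSD⟩
    · have hOXU : OXUnion M X (C₁ ∪ C₂) := ⟨C₁, C₂, h1, h2, hdisj, rfl, hex⟩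
      have hPne : {n | ∃ U, OXUnion M X U ∧ U ⊆ C₁ ∪ C₂ ∧ U.ncard = n}.Nonempty :=
        ⟨_, _, hOXU, subset_rfl, rfl⟩
      obtain ⟨U, hU, hUsub, hUcard⟩ := Nat.sInf_mem hPne
      refine ⟨U, (hcirc U).2 (Or.inr (Or.inr (Or.inl ⟨hU, ?_⟩))), (hUsub.trans hsub).trans hSD⟩
      intro D' hD' hsubU
      have hle : U.ncard ≤ D'.ncard := by
        rw [hUcard]
        exact Nat.sInf_le ⟨D', hD', hsubU.trans hUsub, rfl⟩
      have hUfin : U.Finite := S.finite_toSet.subset (hUsub.trans hsub)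
      exact Set.eq_of_subset_of_ncard_le hsubU hle hUfin

include haE hγE

lemma circuitM'_to_hzs {C : Set α} (hC' : IsCircuit M' C) (hCE : C ⊆ M.E) :
    HZS (psi φ X) C := by
  rcases (hcirc C).1 hC' with h1 | h2 | h3 | h4 | h5 | h6 | h7
  · exact absurd (hCE (h1 ▸ (by simp : a ∈ ({e, a, γ} : Set α)))) haE
  · obtain ⟨hc, heven⟩ := h2
    obtain ⟨S, hSC, hne, hsum⟩ := circuit_structure hφ hc
    refine ⟨S, hne, hSC ▸ subset_rfl, (psi_sum_zero_iff φ X S).2 ⟨hsum, ?_⟩⟩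
    rw [hSC]
    exact heven
  · obtain ⟨⟨C₁, C₂, hx1, hx2, hdisj, hCeq, _⟩, _⟩ := h3
    obtain ⟨S₁, hS₁, hne₁, hsum₁⟩ := circuit_structure hφ hx1.1
    obtain ⟨S₂, hS₂, hne₂, hsum₂⟩ := circuit_structure hφ hx2.1
    have hdisjS : Disjoint S₁ S₂ := by
      rw [← Finset.disjoint_coe, hS₁, hS₂]
      exact hdisj
    have hcoe : ((S₁ ∪ S₂ : Finset α) : Set α) = C := by
      rw [Finset.coe_union, hS₁, hS₂, hCeq]
    refine ⟨S₁ ∪ S₂, hne₁.mono Finset.subset_union_left, hcoe ▸ subset_rfl,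
      (psi_sum_zero_iff φ X _).2 ⟨?_, ?_⟩⟩
    · rw [Finset.sum_union hdisjS, hsum₁, hsum₂, add_zero]
    · rw [hcoe, hCeq, Set.union_inter_distrib_right]
      rw [Set.ncard_union_eq (hdisj.mono inter_subset_left inter_subset_left)
        ((hS₁ ▸ S₁.finite_toSet).subset inter_subset_left)
        ((hS₂ ▸ S₂.finite_toSet).subset inter_subset_left)]
      exact hx1.2.add_odd hx2.2
  · obtain ⟨C₀, _, hCeq⟩ := h4
    exact absurd (hCE (hCeq ▸ (by simp : a ∈ C₀ ∪ {a}))) haE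
  · obtain ⟨C₀, _, _, hCeq⟩ := h5
    exact absurd (hCE (hCeq ▸ (by simp : γ ∈ C₀ ∪ {e, γ}))) hγE
  · obtain ⟨C₀, _, _, hCeq⟩ := h6
    exact absurd (hCE (hCeq ▸ (by simp : γ ∈ (C₀ \ {e}) ∪ {γ}))) hγE
  · obtain ⟨C₀, _, _, _, hCeq⟩ := h7
    exact absurd (hCE (hCeq ▸ (by simp : a ∈ (C₀ \ {e}) ∪ {a, γ}))) haE

include hfin hE'

lemma indepM'_iff {D : Set α} (hDE : D ⊆ M.E) : M'.Indep D ↔ ¬ HZS (psi φ X) D := by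
  have hDE' : D ⊆ M'.E := by
    rw [hE']
    exact hDE.trans subset_union_left
  constructor
  · intro hind h
    obtain ⟨C, hC, hCD⟩ := hzs_to_circuitM' hφ hcirc hDE h
    exact (hC.1.superset hCD hDE').not_indep hind
  · intro h
    rw [Matroid.indep_iff_not_dep]
    refine ⟨fun hdep => ?_, hDE'⟩
    have hfinD : D.Finite := hfin.subset hDE
    obtain ⟨C, hC, hCD⟩ := dep_contains_circuit M' D.ncard D le_rfl hfinD hdep
    exact h ((circuitM'_to_hzs hφ haE hγE hcirc hC (hCD.trans hDE)).mono hCD)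

end MPrime

end MatroidPart

end ESProof

theorem rank_es_splitting
    {α : Type*} (M M' : Matroid α) (X : Set α) (e a γ : α)
    (hfin : M.E.Finite) (hbin : IsBinary M)
    (hXE : X ⊆ M.E) (heX : e ∈ X) (haE : a ∉ M.E) (hγE : γ ∉ M.E) (haγ : a ≠ γ)
    (hsplit : IsESSplit M M' X e a γ)
    (A : Set α) (hAE : A ⊆ M.E) :
    ((∃ C, IsOX M X C ∧ C ⊆ A) → rk M' A = rk M A + 1) ∧
    ((¬ ∃ C, IsOX M X C ∧ C ⊆ A) → rk M' A = rk M A) := by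
  classical
  obtain ⟨hE', hcirc⟩ := hsplit
  obtain ⟨m, φ, hφ⟩ := hbin
  set ψ := ESProof.psi φ X with hψdef
  have hAfin : A.Finite := hfin.subset hAE
  have hbddM : ∀ B : Set α, B ⊆ M.E → BddAbove {n | ∃ I, M.Indep I ∧ I ⊆ B ∧ I.ncard = n} := by
    intro B hB
    refine ⟨B.ncard, ?_⟩
    rintro n ⟨I, hI, hIB, rfl⟩
    exact Set.ncard_le_ncard hIB (hfin.subset hB)
  have hbddM' : BddAbove {n | ∃ I, M'.Indep I ∧ I ⊆ A ∧ I.ncard = n} := by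
    refine ⟨A.ncard, ?_⟩
    rintro n ⟨I, hI, hIA, rfl⟩
    exact Set.ncard_le_ncard hIA hAfin
  have hzeroM : ∀ B : Set α, (0:ℕ) ∈ {n | ∃ I, M.Indep I ∧ I ⊆ B ∧ I.ncard = n} :=
    fun B => ⟨∅, M.empty_indep, empty_subset _, by simp⟩
  have hzeroM' : (0:ℕ) ∈ {n | ∃ I, M'.Indep I ∧ I ⊆ A ∧ I.ncard = n} :=
    ⟨∅, M'.empty_indep, empty_subset _, by simp⟩
  have hiM : ∀ I : Set α, I ⊆ M.E → (M.Indep I ↔ ¬ ESProof.HZS φ I) :=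
    fun I h => ESProof.indep_iff_hzs hφ h
  have hiM' : ∀ D : Set α, D ⊆ M.E → (M'.Indep D ↔ ¬ ESProof.HZS ψ D) :=
    fun D h => ESProof.indepM'_iff hφ hfin haE hγE hE' hcirc h
  constructor
  · rintro ⟨C, hCOX, hCA⟩
    obtain ⟨B, hBind, hBA, hBcard⟩ :=
      Nat.sSup_mem ⟨0, hzeroM A⟩ (hbddM A hAE)
    have hBE : B ⊆ M.E := hBA.trans hAE
    have hBhzs : ¬ ESProof.HZS φ B := (hiM B hBE).1 hBind
    have hrkA : rk M A = B.ncard := hBcard.symm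
    -- find the extra element
    have hx : ∃ x ∈ A, ψ x ∉ Submodule.span (ZMod 2) (ψ '' B) := by
      by_contra hcon
      push_neg at hcon
      obtain ⟨S₀, hS₀C, hne₀, hsum₀⟩ := ESProof.circuit_structure hφ hCOX.1
      have hmem : (∑ x ∈ S₀, ψ x) ∈ Submodule.span (ZMod 2) (ψ '' B) := by
        refine Submodule.sum_mem _ fun x hx => ?_
        have hxC : x ∈ C := by
          rw [← hS₀C]
          exact hx
        exact hcon x (hCA hxC)
      obtain ⟨S, hSB, hSu⟩ := ESProof.mem_span_finsum hmem
      have h01 : ∑ x ∈ S₀, ψ x = (Fin.snoc 0 1 : Fin (m+1) → ZMod 2) := by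
        refine (ESProof.psi_sum_snoc01_iff φ X S₀).2 ⟨hsum₀, ?_⟩
        rw [hS₀C]
        exact hCOX.2
      rw [h01] at hSu
      have hS := (ESProof.psi_sum_snoc01_iff φ X S).1 hSu
      rcases S.eq_empty_or_nonempty with rfl | hSne
      · have h2 := hS.2
        simp [Nat.odd_iff] at h2
      · exact hBhzs ⟨S, hSne, hSB, hS.1⟩
    obtain ⟨x, hxA, hxspan⟩ := hx
    have hxB : x ∉ B := fun h => hxspan (Submodule.subset_span ⟨x, h, rfl⟩)
    have hBfin : B.Finite := hfin.subset hBE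
    have hins : ¬ ESProof.HZS ψ (insert x B) := by
      rintro ⟨S, hne, hsub, hsum⟩
      by_cases hxS : x ∈ S
      · apply hxspan
        have herase : ψ x + ∑ y ∈ S.erase x, ψ y = 0 := by
          rw [Finset.add_sum_erase _ _ hxS]
          exact hsum
        have hps : ψ x = ∑ y ∈ S.erase x, ψ y := by
          have h2 := congrArg (fun v => v + ∑ y ∈ S.erase x, ψ y) herase
          rw [add_assoc, ESProof.addself, add_zero, zero_add] at h2
          exact h2
        rw [hps]
        refine Submodule.sum_mem _ fun y hy => Submodule.subset_span ⟨y, ?_, rfl⟩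
        have hyS : y ∈ S := Finset.mem_of_mem_erase hy
        have hyx : y ≠ x := Finset.ne_of_mem_erase hy
        rcases Set.mem_insert_iff.1 (hsub (Finset.mem_coe.2 hyS)) with h | h
        · exact absurd h hyx
        · exact h
      · refine hBhzs ⟨S, hne, ?_, ((ESProof.psi_sum_zero_iff φ X S).1 hsum).1⟩
        intro y hy
        rcases Set.mem_insert_iff.1 (hsub hy) with rfl | h
        · exact absurd (Finset.mem_coe.1 hy) hxS
        · exact h
    have hins' : M'.Indep (insert x B) := (hiM' _ (insert_subset (hAE hxA) hBE)).2 hins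
    have hmem' : B.ncard + 1 ∈ {n | ∃ I, M'.Indep I ∧ I ⊆ A ∧ I.ncard = n} :=
      ⟨insert x B, hins', insert_subset hxA hBA, by
        rw [Set.ncard_insert_of_notMem hxB hBfin]⟩
    have hge : rk M A + 1 ≤ rk M' A := by
      have h1 := le_csSup hbddM' hmem'
      rw [hrkA]
      exact h1
    have hle : rk M' A ≤ rk M A + 1 := by
      refine csSup_le (s := {n | ∃ I, M'.Indep I ∧ I ⊆ A ∧ I.ncard = n}) ⟨0, hzeroM'⟩ ?_
      rintro n ⟨I, hI, hIA, rfl⟩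
      have hIE : I ⊆ M.E := hIA.trans hAE
      have hInz : ¬ ESProof.HZS ψ I := (hiM' I hIE).1 hI
      have hIfin : I.Finite := hfin.subset hIE
      obtain ⟨J, hJind, hJI, hJcard⟩ := Nat.sSup_mem ⟨0, hzeroM I⟩ (hbddM I hIE)
      have hJA : J.ncard ≤ rk M A := le_csSup (hbddM A hAE) ⟨J, hJind, hJI.trans hIA, rfl⟩
      have hJfin : J.Finite := hIfin.subset hJI
      by_contra hcon
      push_neg at hcon
      have hI2 : J.ncard + 2 ≤ I.ncard := by omega
      have hdiff : 1 < (I \ J).ncard := by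
        have hd := Set.ncard_diff hJI hJfin
        omega
      obtain ⟨xx, hxIJ, yy, hyIJ, hxy⟩ := (Set.one_lt_ncard hIfin.diff).1 hdiff
      have key : ∀ z ∈ I \ J, ∃ Sz : Finset α, z ∈ Sz ∧ ↑Sz ⊆ insert z J ∧
          ∑ w ∈ Sz, ψ w = (Fin.snoc 0 1 : Fin (m+1) → ZMod 2) := by
        rintro z ⟨hzI, hzJ⟩
        have hnind : ¬ M.Indep (insert z J) := by
          intro hind
          have hmemI : (insert z J).ncard ∈ {n | ∃ I', M.Indep I' ∧ I' ⊆ I ∧ I'.ncard = n} :=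
            ⟨insert z J, hind, insert_subset hzI hJI, rfl⟩
          have hleJ := le_csSup (hbddM I hIE) hmemI
          rw [Set.ncard_insert_of_notMem hzJ hJfin, ← hJcard] at hleJ
          omega
        have hz : ESProof.HZS φ (insert z J) := by
          by_contra hcz
          exact hnind ((hiM _ (insert_subset (hIE hzI) (hJI.trans hIE))).2 hcz)
        obtain ⟨S, hne, hsub, hsum⟩ := hz
        have hzS : z ∈ S := by
          by_contra hzS
          refine (hiM J (hJI.trans hIE)).1 hJind ⟨S, hne, ?_, hsum⟩
          intro w hw
          rcases Set.mem_insert_iff.1 (hsub hw) with rfl | h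
          · exact absurd (Finset.mem_coe.1 hw) hzS
          · exact h
        refine ⟨S, hzS, hsub, (ESProof.psi_sum_snoc01_iff φ X S).2 ⟨hsum, ?_⟩⟩
        rcases Nat.even_or_odd (((S : Set α) ∩ X).ncard) with he | ho
        · exfalso
          refine hInz ⟨S, hne, ?_, (ESProof.psi_sum_zero_iff φ X S).2 ⟨hsum, he⟩⟩
          intro w hw
          rcases Set.mem_insert_iff.1 (hsub hw) with rfl | h
          · exact hzI
          · exact hJI h
        · exact ho
      obtain ⟨Sx, hxSx, hSxsub, hSxsum⟩ := key xx hxIJ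
      obtain ⟨Sy, hySy, hSysub, hSysum⟩ := key yy hyIJ
      refine hInz ⟨Sx ∆ Sy, ⟨xx, ?_⟩, ?_, ?_⟩
      · rw [Finset.mem_symmDiff]
        left
        refine ⟨hxSx, fun hxSy => ?_⟩
        rcases Set.mem_insert_iff.1 (hSysub (Finset.mem_coe.2 hxSy)) with h | h
        · exact hxy h
        · exact hxIJ.2 h
      · intro w hw
        rw [Finset.mem_coe, Finset.mem_symmDiff] at hw
        rcases hw with ⟨h, _⟩ | ⟨h, _⟩
        · rcases Set.mem_insert_iff.1 (hSxsub (Finset.mem_coe.2 h)) with rfl | hJ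
          · exact hxIJ.1
          · exact hJI hJ
        · rcases Set.mem_insert_iff.1 (hSysub (Finset.mem_coe.2 h)) with rfl | hJ
          · exact hyIJ.1
          · exact hJI hJ
      · rw [ESProof.sum_symmDiff_char2, hSxsum, hSysum, ESProof.addself]
    exact le_antisymm hle hge
  · intro hno
    have hsets : {n | ∃ I, M'.Indep I ∧ I ⊆ A ∧ I.ncard = n}
        = {n | ∃ I, M.Indep I ∧ I ⊆ A ∧ I.ncard = n} := by
      ext n
      constructor
      · rintro ⟨I, hI, hIA, rfl⟩
        refine ⟨I, ?_, hIA, rfl⟩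
        rw [hiM I (hIA.trans hAE)]
        rintro ⟨S, hne, hSI, hsum⟩
        rcases Nat.even_or_odd (((S:Set α) ∩ X).ncard) with he | ho
        · exact (hiM' I (hIA.trans hAE)).1 hI
            ⟨S, hne, hSI, (ESProof.psi_sum_zero_iff φ X S).2 ⟨hsum, he⟩⟩
        · obtain ⟨C, hCOX, hCS⟩ := ESProof.OX_of_odd hφ X S.card S le_rfl
            (hSI.trans (hIA.trans hAE)) hsum ho
          exact hno ⟨C, hCOX, hCS.trans (hSI.trans hIA)⟩
      · rintro ⟨I, hI, hIA, rfl⟩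
        refine ⟨I, ?_, hIA, rfl⟩
        rw [hiM' I (hIA.trans hAE)]
        rintro ⟨S, hne, hSI, hsum⟩
        exact (hiM I (hIA.trans hAE)).1 hI
          ⟨S, hne, hSI, ((ESProof.psi_sum_zero_iff φ X S).1 hsum).1⟩
    rw [rk, rk, hsets]
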